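/- Let q be a real number with 0 < q ≤ 0.7828, let M ≥ 6 be an integer and m' an integer with 6 ≤ m' ≤ M - 2. Then q(1 - (1 - q^{m'})/(1 - q^{M-1})) < 1 - ln(m'+1)/ln(M). -/

import Mathlib

open Real

lemma log_nat_le_of_pow {n p j : ℕ} (hn : 0 < n) (hj : 0 < j) (h : n ^ j ≤ 2 ^ p) :
    Real.log n ≤ (p : ℝ) / j * Real.log 2 := by
  have h2 : Real.log ((n:ℝ) ^ j) ≤ Real.log ((2:ℝ) ^ p) := by
    apply Real.log_le_log (by positivity)
    exact_mod_cast h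
  rw [Real.log_pow, Real.log_pow] at h2
  rw [div_mul_eq_mul_div, le_div_iff₀ (by exact_mod_cast hj)]
  linarith

lemma log_nat_ge_of_pow {n p j : ℕ} (hj : 0 < j) (h : 2 ^ p ≤ n ^ j) :
    (p : ℝ) / j * Real.log 2 ≤ Real.log n := by
  have h2 : Real.log ((2:ℝ) ^ p) ≤ Real.log ((n:ℝ) ^ j) := by
    apply Real.log_le_log (by positivity)
    exact_mod_cast h
  rw [Real.log_pow, Real.log_pow] at h2
  rw [div_mul_eq_mul_div, div_le_iff₀ (by exact_mod_cast hj)]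
  linarith

lemma log_le_dyadic {n p j : ℕ} {c : ℝ} (hn : 0 < n) (hj : 0 < j) (h : n ^ j ≤ 2 ^ p)
    (hc : (p : ℝ) / j * 0.6931471808 ≤ c) : Real.log n ≤ c := by
  have h1 := log_nat_le_of_pow hn hj h
  have h2 : Real.log 2 < 0.6931471808 := Real.log_two_lt_d9
  have h3 : (0:ℝ) ≤ (p : ℝ) / j := by positivity
  nlinarith

lemma seven_bound : ∀ k : ℕ, 1 ≤ k → ((7 + k : ℕ) : ℝ) * 0.7828 ^ k ≤ 7 := by
  intro k hk
  induction k, hk using Nat.le_induction with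
  | base => norm_num
  | succ n hn ih =>
    have hb : (0:ℝ) ≤ 0.7828 ^ n := by positivity
    have h1 : (0.7828:ℝ) ^ n ≤ 1 := pow_le_one₀ (by norm_num) (by norm_num)
    push_cast at ih ⊢
    rw [pow_succ]
    nlinarith

lemma mono_core (k : ℕ) (hk : 1 ≤ k) {x : ℝ} (hx : 0 ≤ x) (hxb : x ≤ 0.7828) :
    x ^ 7 - x ^ (7 + k) ≤ (0.7828:ℝ) ^ 7 - (0.7828:ℝ) ^ (7 + k) := by
  have hmono : MonotoneOn (fun t : ℝ => t ^ 7 - t ^ (7 + k)) (Set.Icc (0:ℝ) 0.7828) := by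
    apply monotoneOn_of_deriv_nonneg (convex_Icc _ _)
    · exact ((continuous_pow 7).sub (continuous_pow (7 + k))).continuousOn
    · exact ((differentiable_pow 7).sub (differentiable_pow (7 + k))).differentiableOn
    · intro t ht
      rw [interior_Icc] at ht
      obtain ⟨ht0, htb⟩ := ht
      have hd : deriv (fun t : ℝ => t ^ 7 - t ^ (7 + k)) t
          = 7 * t ^ 6 - (7 + k : ℕ) * t ^ (6 + k) := by
        rw [deriv_fun_sub (differentiableAt_pow _) (differentiableAt_pow _), deriv_pow_field, deriv_pow_field]
        have h76 : 7 - 1 = 6 := rfl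
        have h7k : 7 + k - 1 = 6 + k := by omega
        rw [h76, h7k]
        push_cast
        ring
      rw [hd]
      have h1 : ((7 + k : ℕ) : ℝ) * t ^ k ≤ ((7 + k : ℕ) : ℝ) * 0.7828 ^ k :=
        mul_le_mul_of_nonneg_left (pow_le_pow_left₀ ht0.le htb.le k) (by positivity)
      have h2 := seven_bound k hk
      have ht6 : (0:ℝ) ≤ t ^ 6 := by positivity
      have h3 : ((7 + k : ℕ) : ℝ) * t ^ (6 + k) ≤ 7 * t ^ 6 := by
        have he : t ^ (6 + k) = t ^ 6 * t ^ k := by rw [pow_add]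
        rw [he]
        calc ((7 + k : ℕ) : ℝ) * (t ^ 6 * t ^ k) = (((7 + k : ℕ) : ℝ) * t ^ k) * t ^ 6 := by ring
          _ ≤ 7 * t ^ 6 := by nlinarith [pow_nonneg ht0.le k]
      linarith
  have := hmono (Set.mem_Icc.2 ⟨hx, hxb⟩) (Set.mem_Icc.2 ⟨by norm_num, le_refl _⟩) hxb
  simpa using this

lemma tailP : ∀ n : ℕ, 15 ≤ n →
    (0.7828:ℝ) ^ (3 * n) * Real.log n ^ 3 * (n:ℝ) ^ 4 ≤ 22 := by
  intro n hn
  induction n, hn using Nat.le_induction with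
  | base =>
    have h1 : Real.log ((15:ℕ):ℝ) ≤ ((4:ℕ) : ℝ) / ((1:ℕ):ℝ) * Real.log 2 :=
      log_nat_le_of_pow (by norm_num) (by norm_num) (by norm_num)
    norm_num at h1 ⊢
    have h2 : Real.log 2 < 0.6931471808 := Real.log_two_lt_d9
    have h0 : (0:ℝ) ≤ Real.log 15 := Real.log_nonneg (by norm_num)
    have h3 : Real.log 15 ≤ 2.7725887232 := by linarith
    have h4 : Real.log 15 ^ 3 ≤ 2.7725887232 ^ 3 := pow_le_pow_left₀ h0 h3 3
    nlinarith [h4]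
  | succ n hn ih =>
    have hnR : (15:ℝ) ≤ (n:ℝ) := by exact_mod_cast hn
    have hnpos : (0:ℝ) < n := by linarith
    have hlog15 : (2.7:ℝ) ≤ Real.log 15 := by
      have h1 := log_nat_ge_of_pow (n := 15) (p := 39) (j := 10) (by norm_num) (by norm_num)
      have h2 : (0.6931471803:ℝ) < Real.log 2 := Real.log_two_gt_d9
      norm_num at h1
      nlinarith
    have hlogn : (2.7:ℝ) ≤ Real.log n := by
      have : Real.log 15 ≤ Real.log n := Real.log_le_log (by norm_num) hnR
      linarith
    have hlognpos : (0:ℝ) < Real.log n := by linarith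
    have hsucc : Real.log ((n:ℝ) + 1) ≤ Real.log n + 1 / n := by
      have hpos : (0:ℝ) < ((n:ℝ) + 1) / n := by positivity
      have h1 : Real.log (((n:ℝ) + 1) / n) ≤ ((n:ℝ) + 1) / n - 1 :=
        Real.log_le_sub_one_of_pos hpos
      rw [Real.log_div (by linarith) (by linarith)] at h1
      have h2 : ((n:ℝ) + 1) / n - 1 = 1 / n := by field_simp; ring
      linarith [h2 ▸ h1]
    have hstep1 : Real.log ((n:ℝ) + 1) ≤ (83 / 81 : ℝ) * Real.log n := by
      have : (1:ℝ) / n ≤ 2 / 81 * Real.log n := by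
        rw [div_le_iff₀ hnpos]
        nlinarith
      linarith
    have hlogsp : (0:ℝ) ≤ Real.log ((n:ℝ) + 1) := by
      have : Real.log 1 ≤ Real.log ((n:ℝ)+1) := Real.log_le_log (by norm_num) (by linarith)
      simpa using this
    have hcube : Real.log ((n:ℝ) + 1) ^ 3 ≤ (83 / 81 : ℝ) ^ 3 * Real.log n ^ 3 := by
      calc Real.log ((n:ℝ) + 1) ^ 3 ≤ ((83 / 81 : ℝ) * Real.log n) ^ 3 :=
            pow_le_pow_left₀ hlogsp hstep1 3
        _ = (83 / 81 : ℝ) ^ 3 * Real.log n ^ 3 := by ring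
    have hn4 : ((n:ℝ) + 1) ^ 4 ≤ (16 / 15 : ℝ) ^ 4 * (n:ℝ) ^ 4 := by
      calc ((n:ℝ) + 1) ^ 4 ≤ ((16/15 : ℝ) * n) ^ 4 := by
            apply pow_le_pow_left₀ (by linarith) (by nlinarith) 4
        _ = (16 / 15 : ℝ) ^ 4 * (n:ℝ) ^ 4 := by ring
    have hpow : (0.7828:ℝ) ^ (3 * (n + 1)) = 0.7828 ^ 3 * 0.7828 ^ (3 * n) := by
      rw [← pow_add]
      congr 1
      omega
    have hbpos : (0:ℝ) < 0.7828 ^ (3 * n) := by positivity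
    push_cast
    rw [hpow]
    have t1 : (0.7828:ℝ) ^ (3 * n) * Real.log ((n:ℝ)+1) ^ 3 * ((n:ℝ)+1) ^ 4
        ≤ 0.7828 ^ (3 * n) * ((83 / 81 : ℝ) ^ 3 * Real.log n ^ 3) * ((16 / 15 : ℝ) ^ 4 * (n:ℝ) ^ 4) := by
      apply mul_le_mul
      · exact mul_le_mul_of_nonneg_left hcube hbpos.le
      · exact hn4
      · positivity
      · positivity
    have key : (0.7828:ℝ) ^ 3 * 0.7828 ^ (3 * n) * Real.log ((n:ℝ)+1) ^ 3 * ((n:ℝ)+1) ^ 4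
        ≤ (0.7828:ℝ)^3 * (83/81:ℝ)^3 * (16/15:ℝ)^4 *
          (0.7828 ^ (3 * n) * Real.log n ^ 3 * (n:ℝ) ^ 4) := by
      calc (0.7828:ℝ) ^ 3 * 0.7828 ^ (3 * n) * Real.log ((n:ℝ)+1) ^ 3 * ((n:ℝ)+1) ^ 4
          = (0.7828:ℝ) ^ 3 * (0.7828 ^ (3 * n) * Real.log ((n:ℝ)+1) ^ 3 * ((n:ℝ)+1) ^ 4) := by ring
        _ ≤ (0.7828:ℝ) ^ 3 * (0.7828 ^ (3 * n) * ((83 / 81 : ℝ) ^ 3 * Real.log n ^ 3) * ((16 / 15 : ℝ) ^ 4 * (n:ℝ) ^ 4)) :=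
            mul_le_mul_of_nonneg_left t1 (by positivity)
        _ = (0.7828:ℝ)^3 * (83/81:ℝ)^3 * (16/15:ℝ)^4 * (0.7828 ^ (3 * n) * Real.log n ^ 3 * (n:ℝ) ^ 4) := by ring
    have hfac : (0.7828:ℝ)^3 * (83/81:ℝ)^3 * (16/15:ℝ)^4 ≤ 1 := by norm_num
    have hih : (0:ℝ) ≤ 0.7828 ^ (3 * n) * Real.log n ^ 3 * (n:ℝ) ^ 4 := by positivity
    nlinarith [key]

noncomputable def Lt : ℕ → ℝ
  | 6 => 1.9462
  | 7 => 2.0795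
  | 8 => 2.1978
  | 9 => 2.3031
  | 10 => 2.3994
  | 11 => 2.4852
  | 12 => 2.5746
  | 13 => 2.6393
  | _ => 0

lemma Lt_bound : ∀ m : ℕ, 6 ≤ m → m ≤ 13 → Real.log ((m+1:ℕ):ℝ) ≤ Lt m := by
  intro m h1 h2
  interval_cases m
  · have hc : ((6+1:ℕ):ℝ) = ((7:ℕ):ℝ) := by norm_num
    rw [hc]
    exact log_le_dyadic (n:=7) (p:=73) (j:=26) (by norm_num) (by norm_num) (by norm_num)
      (by norm_num [Lt])
  · have hc : ((7+1:ℕ):ℝ) = ((8:ℕ):ℝ) := by norm_num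
    rw [hc]
    exact log_le_dyadic (n:=8) (p:=3) (j:=1) (by norm_num) (by norm_num) (by norm_num)
      (by norm_num [Lt])
  · have hc : ((8+1:ℕ):ℝ) = ((9:ℕ):ℝ) := by norm_num
    rw [hc]
    exact log_le_dyadic (n:=9) (p:=130) (j:=41) (by norm_num) (by norm_num) (by norm_num)
      (by norm_num [Lt])
  · have hc : ((9+1:ℕ):ℝ) = ((10:ℕ):ℝ) := by norm_num
    rw [hc]
    exact log_le_dyadic (n:=10) (p:=103) (j:=31) (by norm_num) (by norm_num) (by norm_num)
      (by norm_num [Lt])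
  · have hc : ((10+1:ℕ):ℝ) = ((11:ℕ):ℝ) := by norm_num
    rw [hc]
    exact log_le_dyadic (n:=11) (p:=45) (j:=13) (by norm_num) (by norm_num) (by norm_num)
      (by norm_num [Lt])
  · have hc : ((11+1:ℕ):ℝ) = ((12:ℕ):ℝ) := by norm_num
    rw [hc]
    exact log_le_dyadic (n:=12) (p:=147) (j:=41) (by norm_num) (by norm_num) (by norm_num)
      (by norm_num [Lt])
  · have hc : ((12+1:ℕ):ℝ) = ((13:ℕ):ℝ) := by norm_num
    rw [hc]
    exact log_le_dyadic (n:=13) (p:=26) (j:=7) (by norm_num) (by norm_num) (by norm_num)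
      (by norm_num [Lt])
  · have hc : ((13+1:ℕ):ℝ) = ((14:ℕ):ℝ) := by norm_num
    rw [hc]
    exact log_le_dyadic (n:=14) (p:=99) (j:=26) (by norm_num) (by norm_num) (by norm_num)
      (by norm_num [Lt])

set_option maxHeartbeats 4000000 in
lemma midnum : ∀ m k : ℕ, 6 ≤ m → m ≤ 13 → 1 ≤ k → k ≤ 9 →
    (0.7828:ℝ)^(m-6) * ((0.7828:ℝ)^7 - (0.7828:ℝ)^(7+k)) * ((4/3 * Lt m) * ((m+1+k:ℕ):ℝ))
      < (1 - (0.7828:ℝ)^7) * (k:ℝ) := by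
  intro m k h1 h2 h3 h4
  interval_cases m <;> interval_cases k <;> norm_num [Lt]

set_option maxHeartbeats 1000000 in
lemma midlin : ∀ m k : ℕ, 6 ≤ m → m ≤ 13 → 10 ≤ k →
    (0.7828:ℝ)^(m+1) * ((4/3 * Lt m) * ((m+1+k:ℕ):ℝ)) < (1 - (0.7828:ℝ)^7) * (k:ℝ) := by
  intro m k h1 h2 h3
  have hkR : (10:ℝ) ≤ (k:ℝ) := by exact_mod_cast h3
  interval_cases m <;> (push_cast; simp only [Lt]; nlinarith [hkR])


set_option maxHeartbeats 1600000 in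
theorem stmt_17 (q : ℝ) (hq0 : 0 < q) (hq : q ≤ 0.7828) (M m' : ℕ)
    (hM : 6 ≤ M) (hm : 6 ≤ m') (hmM : m' ≤ M - 2) :
    q * (1 - (1 - q ^ m') / (1 - q ^ (M - 1))) <
      1 - Real.log ((m' : ℝ) + 1) / Real.log M := by
  have hq1 : q < 1 := lt_of_le_of_lt hq (by norm_num)
  obtain ⟨k, hk1, rfl⟩ : ∃ k, 1 ≤ k ∧ M = m' + 1 + k := ⟨M - m' - 1, by omega, by omega⟩
  have hsub : m' + 1 + k - 1 = m' + k := by omega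
  rw [hsub]
  have hncast : (m':ℝ) + 1 = ((m' + 1 : ℕ) : ℝ) := by push_cast; ring
  rw [hncast]
  have hMgt1 : (1:ℝ) < ((m' + 1 + k : ℕ):ℝ) := by exact_mod_cast (by omega : 1 < m' + 1 + k)
  have hlogM_pos : 0 < Real.log ((m' + 1 + k : ℕ):ℝ) := Real.log_pos hMgt1
  have hngt1 : (1:ℝ) < ((m' + 1 : ℕ):ℝ) := by exact_mod_cast (by omega : 1 < m' + 1)
  have hlogn_pos : 0 < Real.log ((m' + 1:ℕ):ℝ) := Real.log_pos hngt1
  have hbq : ∀ j : ℕ, q ^ j ≤ 0.7828 ^ j := fun j => pow_le_pow_left₀ hq0.le hq j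
  have hyb : q ^ (m' + k) ≤ (0.7828:ℝ) ^ 7 := by
    calc q ^ (m'+k) ≤ (0.7828:ℝ) ^ (m'+k) := hbq _
      _ ≤ (0.7828:ℝ) ^ 7 := pow_le_pow_of_le_one (by norm_num) (by norm_num) (by omega)
  have hD : (1:ℝ) - 0.7828 ^ 7 ≤ 1 - q ^ (m'+k) := by linarith
  have hDpos : (0:ℝ) < 1 - (0.7828:ℝ) ^ 7 := by norm_num
  have hy1 : 0 < 1 - q ^ (m'+k) := by linarith
  have hqk1 : q ^ k ≤ 1 := pow_le_one₀ hq0.le hq1.le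
  have hW0 : 0 ≤ q ^ (m'+1) * (1 - q ^ k) := by
    have h1 : (0:ℝ) ≤ q ^ (m'+1) := by positivity
    nlinarith
  have hrw : q * (1 - (1 - q ^ m') / (1 - q ^ (m'+k)))
      = q ^ (m'+1) * (1 - q ^ k) / (1 - q ^ (m'+k)) := by
    have hne : (1 - q ^ (m'+k)) ≠ 0 := ne_of_gt hy1
    field_simp
    ring
  rw [hrw]
  by_cases hsplit : Real.log ((m' + 1:ℕ):ℝ) ≤ 0.7802 * Real.log ((m' + 1 + k:ℕ):ℝ)
  · -- Case 1 : ratio small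
    have hfrac : Real.log ((m'+1:ℕ):ℝ) / Real.log ((m'+1+k:ℕ):ℝ) ≤ 0.7802 := by
      rw [div_le_iff₀ hlogM_pos]; linarith
    have hWb : q ^ (m'+1) * (1 - q ^ k) ≤ (0.7828:ℝ) ^ 7 := by
      have h1 : q ^ (m'+1) ≤ (0.7828:ℝ)^7 := by
        calc q ^ (m'+1) ≤ (0.7828:ℝ)^(m'+1) := hbq _
          _ ≤ (0.7828:ℝ)^7 := pow_le_pow_of_le_one (by norm_num) (by norm_num) (by omega)
      have h2 : (0:ℝ) ≤ q ^ (m'+1) := by positivity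
      nlinarith [pow_nonneg hq0.le k]
    have hLHS : q ^ (m'+1) * (1 - q ^ k) / (1 - q ^ (m'+k)) ≤ (0.7828:ℝ)^7 / (1 - (0.7828:ℝ)^7) :=
      div_le_div₀ (by positivity) hWb hDpos hD
    have hnum : (0.7828:ℝ)^7 / (1 - (0.7828:ℝ)^7) < 0.2198 := by
      rw [div_lt_iff₀ hDpos]; norm_num
    linarith
  · push_neg at hsplit
    have F1 : Real.log ((m'+1+k:ℕ):ℝ) < 4 / 3 * Real.log ((m'+1:ℕ):ℝ) := by nlinarith
    have F2 : ((m'+1+k:ℕ):ℝ) ^ 3 < ((m'+1:ℕ):ℝ) ^ 4 := by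
      have h3 : Real.log (((m'+1+k:ℕ):ℝ) ^ 3) < Real.log (((m'+1:ℕ):ℝ) ^ 4) := by
        rw [Real.log_pow, Real.log_pow]
        simp only [Nat.cast_ofNat]
        nlinarith
      exact (Real.log_lt_log_iff (by positivity) (by positivity)).1 h3
    have hMpos : (0:ℝ) < ((m'+1+k:ℕ):ℝ) := by positivity
    have F3 : (k:ℝ) / ((m'+1+k:ℕ):ℝ) ≤ Real.log ((m'+1+k:ℕ):ℝ) - Real.log ((m'+1:ℕ):ℝ) := by
      have hpos : (0:ℝ) < ((m'+1:ℕ):ℝ) / ((m'+1+k:ℕ):ℝ) := by positivity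
      have h1 := Real.log_le_sub_one_of_pos hpos
      rw [Real.log_div (by positivity) (by positivity)] at h1
      have h2 : ((m'+1:ℕ):ℝ) / ((m'+1+k:ℕ):ℝ) - 1 = -((k:ℝ) / ((m'+1+k:ℕ):ℝ)) := by
        field_simp
        push_cast; ring
      rw [h2] at h1
      linarith
    have hMM : (0:ℝ) ≤ Real.log ((m'+1+k:ℕ):ℝ) * ((m'+1+k:ℕ):ℝ) :=
      mul_nonneg hlogM_pos.le hMpos.le
    have key : q ^ (m'+1) * (1 - q ^ k) * (Real.log ((m'+1+k:ℕ):ℝ) * ((m'+1+k:ℕ):ℝ))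
        < (1 - (0.7828:ℝ)^7) * (k:ℝ) := by
      by_cases hmid : m' ≤ 13
      · -- middle region
        have hLn := Lt_bound m' hm hmid
        have hC : Real.log ((m'+1+k:ℕ):ℝ) < 4/3 * Lt m' := by linarith
        have s2 : Real.log ((m'+1+k:ℕ):ℝ) * ((m'+1+k:ℕ):ℝ)
            < (4/3 * Lt m') * ((m'+1+k:ℕ):ℝ) := mul_lt_mul_of_pos_right hC hMpos
        by_cases hk9 : k ≤ 9
        · have hqpow7 : q^(m'+1) = q^(m'-6) * q^7 := by rw [← pow_add]; congr 1; omega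
          have hq7k : q^(7+k) ≤ q^7 := pow_le_pow_of_le_one hq0.le hq1.le (by omega)
          have hWb : q^(m'+1)*(1-q^k)
              ≤ (0.7828:ℝ)^(m'-6) * ((0.7828:ℝ)^7 - (0.7828:ℝ)^(7+k)) := by
            have e : q^(m'+1)*(1-q^k) = q^(m'-6) * (q^7 - q^(7+k)) := by rw [hqpow7]; ring
            rw [e]
            exact mul_le_mul (hbq _) (mono_core k hk1 hq0.le hq) (by linarith) (by positivity)
          have s1 : q^(m'+1)*(1-q^k) * (Real.log ((m'+1+k:ℕ):ℝ) * ((m'+1+k:ℕ):ℝ))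
              ≤ (0.7828:ℝ)^(m'-6) * ((0.7828:ℝ)^7 - (0.7828:ℝ)^(7+k))
                * (Real.log ((m'+1+k:ℕ):ℝ) * ((m'+1+k:ℕ):ℝ)) :=
            mul_le_mul_of_nonneg_right hWb hMM
          have hwb0 : (0:ℝ) < (0.7828:ℝ)^(m'-6) * ((0.7828:ℝ)^7 - (0.7828:ℝ)^(7+k)) := by
            have hlt : (0.7828:ℝ)^(7+k) < (0.7828:ℝ)^7 :=
              pow_lt_pow_right_of_lt_one₀ (by norm_num) (by norm_num) (by omega)
            have hb0 : (0:ℝ) < (0.7828:ℝ)^(m'-6) := by positivity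
            nlinarith
          have s3 : (0.7828:ℝ)^(m'-6) * ((0.7828:ℝ)^7 - (0.7828:ℝ)^(7+k))
                * (Real.log ((m'+1+k:ℕ):ℝ) * ((m'+1+k:ℕ):ℝ))
              < (0.7828:ℝ)^(m'-6) * ((0.7828:ℝ)^7 - (0.7828:ℝ)^(7+k))
                * ((4/3 * Lt m') * ((m'+1+k:ℕ):ℝ)) := mul_lt_mul_of_pos_left s2 hwb0
          have s4 := midnum m' k hm hmid hk1 hk9
          linarith
        · push_neg at hk9
          have hk10 : 10 ≤ k := hk9
          have hWb : q^(m'+1)*(1-q^k) ≤ (0.7828:ℝ)^(m'+1) := by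
            nlinarith [hbq (m'+1), pow_nonneg hq0.le (m'+1), pow_nonneg hq0.le k, hqk1]
          have s1 : q^(m'+1)*(1-q^k) * (Real.log ((m'+1+k:ℕ):ℝ) * ((m'+1+k:ℕ):ℝ))
              ≤ (0.7828:ℝ)^(m'+1) * (Real.log ((m'+1+k:ℕ):ℝ) * ((m'+1+k:ℕ):ℝ)) :=
            mul_le_mul_of_nonneg_right hWb hMM
          have s3 : (0.7828:ℝ)^(m'+1) * (Real.log ((m'+1+k:ℕ):ℝ) * ((m'+1+k:ℕ):ℝ))
              < (0.7828:ℝ)^(m'+1) * ((4/3 * Lt m') * ((m'+1+k:ℕ):ℝ)) :=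
            mul_lt_mul_of_pos_left s2 (by positivity)
          have s4 := midlin m' k hm hmid hk10
          linarith
      · -- tail : m' ≥ 14
        push_neg at hmid
        have h15 : 15 ≤ m' + 1 := by omega
        have htail := tailP (m'+1) h15
        have hkpos : (0:ℝ) < (k:ℝ) := by exact_mod_cast (by omega : 0 < k)
        have hber : 1 - q ^ k ≤ (k:ℝ) * (1 - q) := by
          have hb : 1 + (k:ℝ) * (q - 1) ≤ q ^ k := by
            simpa using one_add_mul_le_pow (show (-2:ℝ) ≤ q - 1 by linarith) k
          linarith
        have hqpow7 : q^(m'+1) = q^(m'-6) * q^7 := by rw [← pow_add]; congr 1; omega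
        have hbpow7 : (0.7828:ℝ)^(m'+1) = 0.7828^(m'-6) * (0.7828:ℝ)^7 := by
          rw [← pow_add]; congr 1; omega
        have hmono := mono_core 1 le_rfl hq0.le hq
        have hq8 : q^(7+1) ≤ q^7 := pow_le_pow_of_le_one hq0.le hq1.le (by norm_num)
        have h1 : q^(m'-6) * (q^7 - q^(7+1)) ≤ 0.7828^(m'-6) * ((0.7828:ℝ)^7 - (0.7828:ℝ)^(7+1)) :=
          mul_le_mul (hbq _) hmono (by linarith) (by positivity)
        have hw' : q^(m'+1) * (1 - q^k) ≤ (k:ℝ) * ((0.7828:ℝ)^(m'+1) * 0.2172) := by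
          have e1 : q^(m'+1) * (1 - q^k) ≤ q^(m'+1) * ((k:ℝ) * (1-q)) :=
            mul_le_mul_of_nonneg_left hber (by positivity)
          have e2 : q^(m'+1) * ((k:ℝ)*(1-q)) = (k:ℝ) * (q^(m'-6) * (q^7 - q^(7+1))) := by
            rw [hqpow7]; ring
          have e3 : (0.7828:ℝ)^(m'-6) * ((0.7828:ℝ)^7 - (0.7828:ℝ)^(7+1))
              = (0.7828:ℝ)^(m'+1) * 0.2172 := by
            rw [hbpow7]; ring
          calc q^(m'+1)*(1-q^k) ≤ q^(m'+1)*((k:ℝ)*(1-q)) := e1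
            _ = (k:ℝ) * (q^(m'-6)*(q^7-q^(7+1))) := e2
            _ ≤ (k:ℝ) * (0.7828^(m'-6) * ((0.7828:ℝ)^7 - (0.7828:ℝ)^(7+1))) :=
                mul_le_mul_of_nonneg_left h1 (by positivity)
            _ = (k:ℝ) * ((0.7828:ℝ)^(m'+1) * 0.2172) := by rw [e3]
        have hTM : (0.7828:ℝ)^(m'+1) * Real.log ((m'+1:ℕ):ℝ) * ((m'+1+k:ℕ):ℝ) < 2.8021 := by
          by_contra hcon
          push_neg at hcon
          have h3 : (2.8021:ℝ)^3 ≤ ((0.7828:ℝ)^(m'+1) * Real.log ((m'+1:ℕ):ℝ) * ((m'+1+k:ℕ):ℝ))^3 :=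
            pow_le_pow_left₀ (by norm_num) hcon 3
          have hexp : ((0.7828:ℝ)^(m'+1) * Real.log ((m'+1:ℕ):ℝ) * ((m'+1+k:ℕ):ℝ))^3
              = (0.7828:ℝ)^(3*(m'+1)) * Real.log ((m'+1:ℕ):ℝ)^3 * ((m'+1+k:ℕ):ℝ)^3 := by
            rw [mul_pow, mul_pow, ← pow_mul, mul_comm (m'+1) 3]
          rw [hexp] at h3
          have hlt : (0.7828:ℝ)^(3*(m'+1)) * Real.log ((m'+1:ℕ):ℝ)^3 * ((m'+1+k:ℕ):ℝ)^3
              < (0.7828:ℝ)^(3*(m'+1)) * Real.log ((m'+1:ℕ):ℝ)^3 * ((m'+1:ℕ):ℝ)^4 := by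
            apply mul_lt_mul_of_pos_left F2
            positivity
          nlinarith [htail, h3, hlt]
        have e2 : Real.log ((m'+1+k:ℕ):ℝ) * ((m'+1+k:ℕ):ℝ)
            ≤ (4/3 * Real.log ((m'+1:ℕ):ℝ)) * ((m'+1+k:ℕ):ℝ) :=
          mul_le_mul_of_nonneg_right F1.le hMpos.le
        have e1 : q^(m'+1)*(1-q^k) * (Real.log ((m'+1+k:ℕ):ℝ) * ((m'+1+k:ℕ):ℝ))
            ≤ ((k:ℝ) * ((0.7828:ℝ)^(m'+1) * 0.2172)) * (Real.log ((m'+1+k:ℕ):ℝ) * ((m'+1+k:ℕ):ℝ)) :=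
          mul_le_mul_of_nonneg_right hw' hMM
        have e3 : ((k:ℝ) * ((0.7828:ℝ)^(m'+1) * 0.2172)) * (Real.log ((m'+1+k:ℕ):ℝ) * ((m'+1+k:ℕ):ℝ))
            ≤ ((k:ℝ) * ((0.7828:ℝ)^(m'+1) * 0.2172)) * ((4/3 * Real.log ((m'+1:ℕ):ℝ)) * ((m'+1+k:ℕ):ℝ)) := by
          apply mul_le_mul_of_nonneg_left e2
          positivity
        have e4 : ((k:ℝ) * ((0.7828:ℝ)^(m'+1) * 0.2172)) * ((4/3 * Real.log ((m'+1:ℕ):ℝ)) * ((m'+1+k:ℕ):ℝ))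
            = (0.2896 * (k:ℝ)) * ((0.7828:ℝ)^(m'+1) * Real.log ((m'+1:ℕ):ℝ) * ((m'+1+k:ℕ):ℝ)) := by
          ring
        have e5 : (0.2896 * (k:ℝ)) * ((0.7828:ℝ)^(m'+1) * Real.log ((m'+1:ℕ):ℝ) * ((m'+1+k:ℕ):ℝ))
            < (0.2896 * (k:ℝ)) * 2.8021 := by
          apply mul_lt_mul_of_pos_left hTM
          positivity
        have e6 : (0.2896 * (k:ℝ)) * 2.8021 ≤ (1 - (0.7828:ℝ)^7) * (k:ℝ) := by nlinarith
        calc q^(m'+1)*(1-q^k) * (Real.log ((m'+1+k:ℕ):ℝ) * ((m'+1+k:ℕ):ℝ)) ≤ _ := e1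
          _ ≤ _ := e3
          _ = _ := e4
          _ < _ := e5
          _ ≤ _ := e6
    -- finish from key
    have step1 : q ^ (m'+1) * (1 - q ^ k) / (1 - q ^ (m'+k))
        ≤ q ^ (m'+1) * (1 - q ^ k) / (1 - (0.7828:ℝ)^7) := by
      gcongr
    have step2 : q ^ (m'+1) * (1 - q ^ k) / (1 - (0.7828:ℝ)^7)
        < ((k:ℝ)/((m'+1+k:ℕ):ℝ)) / Real.log ((m'+1+k:ℕ):ℝ) := by
      rw [div_lt_div_iff₀ hDpos hlogM_pos]
      have hkM : (k:ℝ)/((m'+1+k:ℕ):ℝ) * (1 - (0.7828:ℝ)^7)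
          = ((1 - (0.7828:ℝ)^7) * (k:ℝ)) / ((m'+1+k:ℕ):ℝ) := by ring
      rw [hkM, lt_div_iff₀ hMpos]
      nlinarith [key]
    have step3 : ((k:ℝ)/((m'+1+k:ℕ):ℝ)) / Real.log ((m'+1+k:ℕ):ℝ)
        ≤ 1 - Real.log ((m'+1:ℕ):ℝ) / Real.log ((m'+1+k:ℕ):ℝ) := by
      have heq : 1 - Real.log ((m'+1:ℕ):ℝ) / Real.log ((m'+1+k:ℕ):ℝ)
          = (Real.log ((m'+1+k:ℕ):ℝ) - Real.log ((m'+1:ℕ):ℝ)) / Real.log ((m'+1+k:ℕ):ℝ) := by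
        rw [sub_div, div_self (ne_of_gt hlogM_pos)]
      rw [heq]
      exact (div_le_div_iff_of_pos_right hlogM_pos).2 F3
    linarith
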